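/- Let n be a positive integer, ℓ_A, ℓ_U, ℓ_B > 0, 0 ≤ p_U < p_A ≤ 1, Δ = p_A − p_U, ρ = ℓ_A/ℓ_U, and τ̂ = n(p_A + p_U)/2 − ln(ρ)/(4Δ), and assume n·p_U ≤ τ̂ ≤ n·p_A. Let ε₁, …, ε_n be independent random variables in [0,1] with E[ε_i] ≥ p_A for all i. Then n·ℓ_B + P(Σ_{i=1}^n ε_i < τ̂)·ℓ_A ≤ n·ℓ_B + exp(−(n/2)Δ²)·√(ℓ_A·ℓ_U). -/

import Mathlib

open MeasureTheory ProbabilityTheory Real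

lemma phi_pos {m : ℝ} (h0 : 0 ≤ m) (h1 : m ≤ 1) (t : ℝ) :
    0 < 1 - m + m * Real.exp t := by
  rcases eq_or_lt_of_le h0 with h | h
  · simp [← h]
  · nlinarith [Real.exp_pos t, mul_pos h (Real.exp_pos t)]

lemma hoeffding_aux {m : ℝ} (h0 : 0 ≤ m) (h1 : m ≤ 1) (t : ℝ) :
    1 - m + m * Real.exp t ≤ Real.exp (t * m + t ^ 2 / 8) := by
  set φ : ℝ → ℝ := fun t => 1 - m + m * Real.exp t with hφdef
  have hφpos : ∀ t, 0 < φ t := fun t => phi_pos h0 h1 t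
  have hφ : ∀ t, HasDerivAt φ (m * Real.exp t) t := by
    intro t
    exact ((Real.hasDerivAt_exp t).const_mul m).const_add (1 - m)
  set f : ℝ → ℝ := fun t => t * m + t ^ 2 / 8 - Real.log (φ t) with hfdef
  set f' : ℝ → ℝ := fun t => m + t / 4 - m * Real.exp t / φ t with hf'def
  have hf : ∀ t, HasDerivAt f (f' t) t := by
    intro t
    have h1' : HasDerivAt (fun t : ℝ => t * m + t ^ 2 / 8) (m + t / 4) t := by
      have := ((hasDerivAt_id t).mul_const m).add ((hasDerivAt_pow 2 t).div_const 8)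
      refine this.congr_deriv ?_
      norm_num
      ring
    have h2' : HasDerivAt (fun t => Real.log (φ t)) (m * Real.exp t / φ t) t :=
      (hφ t).log (hφpos t).ne'
    exact h1'.sub h2'
  set g : ℝ → ℝ := fun t => m * Real.exp t / φ t with hgdef
  have hf' : ∀ t, HasDerivAt f'
      (1 / 4 - (m * Real.exp t * φ t - m * Real.exp t * (m * Real.exp t)) / (φ t) ^ 2) t := by
    intro t
    have hd : HasDerivAt (fun t => m * Real.exp t) (m * Real.exp t) t :=
      (Real.hasDerivAt_exp t).const_mul m
    have hq : HasDerivAt (fun t => m * Real.exp t / φ t)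
        ((m * Real.exp t * φ t - m * Real.exp t * (m * Real.exp t)) / (φ t) ^ 2) t :=
      hd.div (hφ t) (hφpos t).ne'
    have hl : HasDerivAt (fun t : ℝ => m + t / 4) (1 / 4) t := by
      simpa using ((hasDerivAt_id t).div_const 4).const_add m
    exact hl.sub hq
  have key : ∀ x y : ℝ, 0 < y → (x * y - x * x) / y ^ 2 ≤ 1 / 4 := by
    intro x y hy
    rw [div_le_iff₀ (pow_pos hy 2)]
    nlinarith [sq_nonneg (y - 2 * x)]
  have hsecond : ∀ t, 0 ≤ 1 / 4 -
      (m * Real.exp t * φ t - m * Real.exp t * (m * Real.exp t)) / (φ t) ^ 2 := by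
    intro t
    linarith [key (m * Real.exp t) (φ t) (hφpos t)]
  have hf'mono : Monotone f' := monotone_of_hasDerivAt_nonneg hf' hsecond
  have hf'0 : f' 0 = 0 := by simp [hf'def, hφdef]
  have hf0 : f 0 = 0 := by simp [hfdef, hφdef]
  have hfnonneg : ∀ t, 0 ≤ f t := by
    intro t
    rcases le_total 0 t with ht | ht
    · have hmono : MonotoneOn f (Set.Ici 0) := by
        refine monotoneOn_of_hasDerivWithinAt_nonneg (convex_Ici 0)
          (fun x _ => (hf x).continuousAt.continuousWithinAt)
          (fun x _ => (hf x).hasDerivWithinAt) ?_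
        intro x hx
        rw [interior_Ici] at hx
        rw [← hf'0]
        exact hf'mono hx.le
      have := hmono (Set.self_mem_Ici) (Set.mem_Ici.2 ht) ht
      rwa [hf0] at this
    · have hmono : AntitoneOn f (Set.Iic 0) := by
        refine antitoneOn_of_hasDerivWithinAt_nonpos (convex_Iic 0)
          (fun x _ => (hf x).continuousAt.continuousWithinAt)
          (fun x _ => (hf x).hasDerivWithinAt) ?_
        intro x hx
        rw [interior_Iic] at hx
        rw [← hf'0]
        exact hf'mono hx.le
      have := hmono (Set.mem_Iic.2 ht) (Set.self_mem_Iic) ht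
      rwa [hf0] at this
  have hlog : Real.log (φ t) ≤ t * m + t ^ 2 / 8 := by
    have := hfnonneg t
    simp only [hfdef] at this
    linarith
  calc φ t = Real.exp (Real.log (φ t)) := (Real.exp_log (hφpos t)).symm
    _ ≤ Real.exp (t * m + t ^ 2 / 8) := Real.exp_le_exp.2 hlog

lemma mgf_bound {Ω : Type*} [MeasureSpace Ω] [IsProbabilityMeasure (ℙ : Measure Ω)]
    (X : Ω → ℝ) (hX : Measurable X) (hb : ∀ ω, X ω ∈ Set.Icc (0:ℝ) 1) (t : ℝ) :
    mgf X ℙ t ≤ Real.exp (t * (∫ ω, X ω) + t ^ 2 / 8) := by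
  have hXint : Integrable X ℙ := by
    refine (integrable_const (1:ℝ)).mono' hX.aestronglyMeasurable ?_
    filter_upwards with ω
    rw [Real.norm_eq_abs, abs_le]
    exact ⟨by linarith [(hb ω).1], (hb ω).2⟩
  have hexp : ∀ ω, Real.exp (t * X ω) ≤ (1 - X ω) + X ω * Real.exp t := by
    intro ω
    have h := convexOn_exp.2 (Set.mem_univ (0:ℝ)) (Set.mem_univ t)
      (by linarith [(hb ω).2] : (0:ℝ) ≤ 1 - X ω) (hb ω).1 (by ring)
    simpa [smul_eq_mul, mul_comm] using h
  have hexpint : Integrable (fun ω => Real.exp (t * X ω)) ℙ := by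
    refine (integrable_const (Real.exp |t|)).mono'
      (hX.const_mul t).exp.aestronglyMeasurable ?_
    filter_upwards with ω
    rw [Real.norm_eq_abs, abs_of_pos (Real.exp_pos _), Real.exp_le_exp]
    calc t * X ω ≤ |t * X ω| := le_abs_self _
      _ = |t| * |X ω| := abs_mul _ _
      _ ≤ |t| * 1 := by
          gcongr
          rw [abs_le]; exact ⟨by linarith [(hb ω).1], (hb ω).2⟩
      _ = |t| := mul_one _
  have hm0 : 0 ≤ ∫ ω, X ω := integral_nonneg fun ω => (hb ω).1
  have hm1 : (∫ ω, X ω) ≤ 1 := by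
    have := integral_mono hXint (integrable_const 1) fun ω => (hb ω).2
    simpa using this
  have hrhsint : Integrable (fun ω => (1 - X ω) + X ω * Real.exp t) ℙ :=
    ((integrable_const (1:ℝ)).sub hXint).add (hXint.mul_const _)
  calc mgf X ℙ t = ∫ ω, Real.exp (t * X ω) := rfl
    _ ≤ ∫ ω, ((1 - X ω) + X ω * Real.exp t) :=
        integral_mono hexpint hrhsint hexp
    _ = 1 - (∫ ω, X ω) + (∫ ω, X ω) * Real.exp t := by
        have i1 : Integrable (fun ω => (1:ℝ) - X ω) ℙ := (integrable_const (1:ℝ)).sub hXint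
        have i2 : Integrable (fun ω => X ω * Real.exp t) ℙ := hXint.mul_const _
        rw [integral_add i1 i2, integral_sub (integrable_const 1) hXint,
          integral_mul_const, integral_const]
        simp
    _ ≤ Real.exp (t * (∫ ω, X ω) + t ^ 2 / 8) := hoeffding_aux hm0 hm1 t

/-- Theorem 1 (attacker side): with the nearly-optimal threshold
`τ̂ = n (pA + pU) / 2 - ln ρ / (4 Δ)`, the attacker's expected loss
`n ℓB + P(∑ εᵢ < τ̂) ℓA` is bounded by `n ℓB + exp (-(n/2) Δ²) √(ℓA ℓU)`. -/
theorem theorem1_attacker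
    {Ω : Type*} [MeasureSpace Ω] [IsProbabilityMeasure (ℙ : Measure Ω)]
    (n : ℕ) (hn : 0 < n)
    (ℓA ℓU ℓB : ℝ) (hℓA : 0 < ℓA) (hℓU : 0 < ℓU) (hℓB : 0 < ℓB)
    (pA pU : ℝ) (hpU : 0 ≤ pU) (hlt : pU < pA) (hpA : pA ≤ 1)
    (Δ : ℝ) (hΔ : Δ = pA - pU)
    (ρ : ℝ) (hρ : ρ = ℓA / ℓU)
    (τ : ℝ) (hτ : τ = n * (pA + pU) / 2 - Real.log ρ / (4 * Δ))
    (hτl : n * pU ≤ τ) (hτu : τ ≤ n * pA)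
    (ε : Fin n → Ω → ℝ)
    (hmeas : ∀ i, Measurable (ε i))
    (hindep : iIndepFun ε ℙ)
    (hbound : ∀ i ω, ε i ω ∈ Set.Icc (0 : ℝ) 1)
    (hmean : ∀ i, pA ≤ ∫ ω, ε i ω) :
    n * ℓB + (ℙ {ω | ∑ i, ε i ω < τ}).toReal * ℓA
      ≤ n * ℓB + Real.exp (-(n / 2) * Δ ^ 2) * Real.sqrt (ℓA * ℓU) := by
  have hnR : (0:ℝ) < n := Nat.cast_pos.2 hn
  have hΔpos : 0 < Δ := by rw [hΔ]; linarith
  have hρpos : 0 < ρ := by rw [hρ]; positivity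
  set a : ℝ := n * pA - τ with ha_def
  have ha : 0 ≤ a := by simp [ha_def]; linarith
  set t : ℝ := -(4 * a / n) with ht_def
  have ht : t ≤ 0 := by
    rw [ht_def, neg_nonpos]
    positivity
  -- integrability of exp (t * ε i)
  have hint : ∀ i, Integrable (fun ω => Real.exp (t * ε i ω)) ℙ := by
    intro i
    refine (integrable_const (Real.exp |t|)).mono'
      ((hmeas i).const_mul t).exp.aestronglyMeasurable ?_
    filter_upwards with ω
    rw [Real.norm_eq_abs, abs_of_pos (Real.exp_pos _), Real.exp_le_exp]
    calc t * ε i ω ≤ |t * ε i ω| := le_abs_self _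
      _ = |t| * |ε i ω| := abs_mul _ _
      _ ≤ |t| * 1 := by
          gcongr
          rw [abs_le]; exact ⟨by linarith [(hbound i ω).1], (hbound i ω).2⟩
      _ = |t| := mul_one _
  have hint_sum : Integrable (fun ω => Real.exp (t * (∑ i, ε i) ω)) ℙ :=
    hindep.integrable_exp_mul_sum hmeas fun i _ => hint i
  -- Chernoff
  have step1 : (ℙ {ω | ∑ i, ε i ω < τ}).toReal ≤ (ℙ {ω | (∑ i, ε i) ω ≤ τ}).toReal := by
    refine ENNReal.toReal_mono (measure_ne_top _ _) (measure_mono ?_)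
    intro ω hω
    simp only [Set.mem_setOf_eq, Finset.sum_apply] at *
    exact hω.le
  have step2 : (ℙ {ω | (∑ i, ε i) ω ≤ τ}).toReal
      ≤ Real.exp (-t * τ) * mgf (∑ i, ε i) ℙ t :=
    measure_le_le_exp_mul_mgf τ ht hint_sum
  have step3 : mgf (∑ i, ε i) ℙ t ≤ Real.exp (n * (t * pA + t ^ 2 / 8)) := by
    rw [hindep.mgf_sum hmeas Finset.univ]
    calc ∏ i, mgf (ε i) ℙ t
        ≤ ∏ _i : Fin n, Real.exp (t * pA + t ^ 2 / 8) := by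
          refine Finset.prod_le_prod (fun i _ => mgf_nonneg) fun i _ => ?_
          refine (mgf_bound (ε i) (hmeas i) (hbound i) t).trans ?_
          rw [Real.exp_le_exp]
          have h := mul_le_mul_of_nonpos_left (hmean i) ht
          exact add_le_add_left h _
      _ = Real.exp (n * (t * pA + t ^ 2 / 8)) := by
          rw [Finset.prod_const, Finset.card_univ, Fintype.card_fin, ← Real.exp_nat_mul]
  have hchern : (ℙ {ω | ∑ i, ε i ω < τ}).toReal ≤ Real.exp (-(2 * a ^ 2 / n)) := by
    refine step1.trans (step2.trans ?_)
    calc Real.exp (-t * τ) * mgf (∑ i, ε i) ℙ t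
        ≤ Real.exp (-t * τ) * Real.exp (n * (t * pA + t ^ 2 / 8)) := by
          gcongr
      _ = Real.exp (-t * τ + n * (t * pA + t ^ 2 / 8)) := (Real.exp_add _ _).symm
      _ = Real.exp (-(2 * a ^ 2 / n)) := by
          congr 1
          rw [ht_def, ha_def]
          field_simp
          ring
  -- arithmetic with the threshold
  set L : ℝ := Real.log ρ with hL_def
  have ha_eq : a = n * Δ / 2 + L / (4 * Δ) := by
    rw [ha_def, hτ, hΔ, hL_def]; ring
  have hexp_eq : 2 * a ^ 2 / n = n / 2 * Δ ^ 2 + L / 2 + L ^ 2 / (8 * n * Δ ^ 2) := by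
    rw [ha_eq]
    field_simp
    ring
  have hfinal : Real.exp (-(2 * a ^ 2 / n)) * ℓA
      ≤ Real.exp (-(n / 2) * Δ ^ 2) * Real.sqrt (ℓA * ℓU) := by
    have h1 : Real.exp (-(2 * a ^ 2 / n)) ≤ Real.exp (-(n / 2) * Δ ^ 2 - L / 2) := by
      rw [Real.exp_le_exp, hexp_eq]
      have : 0 ≤ L ^ 2 / (8 * n * Δ ^ 2) := by positivity
      linarith
    have h2 : Real.exp (-(n / 2) * Δ ^ 2 - L / 2) * ℓA
        = Real.exp (-(n / 2) * Δ ^ 2) * Real.sqrt (ℓA * ℓU) := by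
      rw [Real.exp_sub, div_mul_eq_mul_div, mul_div_assoc]
      congr 1
      have hexpL : Real.exp (L / 2) = Real.sqrt ρ := by
        rw [hL_def, Real.exp_half, Real.exp_log hρpos]
      rw [hexpL, hρ, Real.sqrt_div hℓA.le, div_div_eq_mul_div, Real.sqrt_mul hℓA.le,
        div_eq_iff (Real.sqrt_ne_zero'.2 hℓA)]
      linear_combination (-Real.sqrt ℓU) * Real.sq_sqrt hℓA.le
    calc Real.exp (-(2 * a ^ 2 / n)) * ℓA
        ≤ Real.exp (-(n / 2) * Δ ^ 2 - L / 2) * ℓA := by gcongr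
      _ = _ := h2
  have := mul_le_mul_of_nonneg_right hchern hℓA.le
  have := this.trans hfinal
  linarith
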